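/- Let q ∈ (0,1]ᴺ and define the iterated functional N_q[ρ] = ∫_{Ω₁}(⋯(∫_{Ω_N} ρ(x₁,…,x_N)^{q_N} dm_N)^{q_{N−1}}⋯)^{q₁} dm₁ on a product measure space. Then for nonnegative measurable ρ₁, ρ₂ and 0 ≤ α ≤ 1, N_q satisfies both the subadditivity N_q[ρ₁ + ρ₂] ≤ N_q[ρ₁] + N_q[ρ₂] and the concavity N_q[αρ₁ + (1−α)ρ₂] ≥ α N_q[ρ₁] + (1−α) N_q[ρ₂] on the cone of nonnegative functions. -/

import Mathlib

open MeasureTheory ENNReal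

/-- The iterated (anisotropic) functional
`N_q[ρ] = ∫_{Ω₁}(⋯(∫_{Ω_N} ρ^{q_N} dm_N)^{q_{N-1}}⋯)^{q₁} dm₁`,
defined recursively: the outermost integral is over the first factor. -/
noncomputable def NQe : (N : ℕ) → (Ω : Fin N → Type) →
    (inst : ∀ i, MeasurableSpace (Ω i)) →
    (m : ∀ i, @MeasureTheory.Measure (Ω i) (inst i)) → (q : Fin N → ℝ) →
    ((∀ i, Ω i) → ℝ≥0∞) → ℝ≥0∞
  | 0, _, _, _, _, ρ => ρ fun i => i.elim0
  | _ + 1, Ω, inst, m, q, ρ =>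
      @MeasureTheory.lintegral (Ω 0) (inst 0) (m 0) fun x0 =>
        (NQe _ (fun i => Ω i.succ) (fun i => inst i.succ) (fun i => m i.succ)
            (fun i => q i.succ) fun xs => ρ (Fin.cons x0 xs)) ^ q 0

-- pointwise concavity of rpow on ℝ≥0∞
lemma concave_rpow_pt {p : ℝ} (hp : 0 < p) (hp1 : p ≤ 1) (α a b : ℝ≥0∞) (hα : α ≤ 1) :
    α * a ^ p + (1 - α) * b ^ p ≤ (α * a + (1 - α) * b) ^ p := by
  have hw : α + (1 - α) = 1 := add_tsub_cancel_of_le hα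
  have hp' : (1:ℝ) ≤ 1 / p := by rw [le_div_iff₀ hp, one_mul]; exact hp1
  have h := ENNReal.rpow_arith_mean_le_arith_mean2_rpow (p := 1 / p) α (1 - α) (a ^ p) (b ^ p) hw hp'
  have hr : ∀ x : ℝ≥0∞, (x ^ p) ^ (1 / p) = x := fun x => by
    rw [← ENNReal.rpow_mul, mul_one_div_cancel hp.ne', ENNReal.rpow_one]
  rw [hr, hr] at h
  calc α * a ^ p + (1 - α) * b ^ p
      = ((α * a ^ p + (1 - α) * b ^ p) ^ (1 / p)) ^ p := by
        rw [← ENNReal.rpow_mul, one_div_mul_cancel hp.ne', ENNReal.rpow_one]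
    _ ≤ (α * a + (1 - α) * b) ^ p := ENNReal.rpow_le_rpow h hp.le

lemma NQe_meas : ∀ (N : ℕ) (Ω : Fin N → Type) (inst : ∀ i, MeasurableSpace (Ω i))
    (m : ∀ i, @MeasureTheory.Measure (Ω i) (inst i)) (_ : ∀ i, SigmaFinite (m i))
    (q : Fin N → ℝ) {α : Type} [MeasurableSpace α] (g : α → (∀ i, Ω i) → ℝ≥0∞),
    Measurable (Function.uncurry g) → Measurable fun a => NQe N Ω inst m q (g a)
  | 0, Ω, inst, m, hσ, q, α, _, g, hg => by
    show Measurable fun a => g a (fun i => i.elim0)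
    exact hg.comp (measurable_id.prodMk measurable_const)
  | n + 1, Ω, inst, m, hσ, q, α, _, g, hg => by
    show Measurable fun a => ∫⁻ x0, (NQe n _ _ _ _ fun xs => g a (Fin.cons x0 xs)) ^ q 0 ∂(m 0)
    haveI := hσ 0
    refine Measurable.lintegral_prod_right' (f := fun p : α × Ω 0 =>
      (NQe n (fun i => Ω i.succ) (fun i => inst i.succ) (fun i => m i.succ)
        (fun i => q i.succ) fun xs => g p.1 (Fin.cons p.2 xs)) ^ q 0) ?_
    refine Measurable.pow ?_ measurable_const
    have hc : Measurable fun r : (α × Ω 0) × (∀ i : Fin n, Ω i.succ) =>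
        ((r.1.1, Fin.cons r.1.2 r.2) : α × (∀ i, Ω i)) := by
      refine (measurable_fst.comp measurable_fst).prodMk ?_
      refine measurable_pi_lambda _ fun i => ?_
      refine Fin.cases ?_ (fun j => ?_) i
      · exact (measurable_snd.comp measurable_fst :
          Measurable fun r : (α × Ω 0) × (∀ i : Fin n, Ω i.succ) => r.1.2)
      · exact (measurable_pi_apply j).comp measurable_snd
    have h1 := NQe_meas n (fun i => Ω i.succ) (fun i => inst i.succ) (fun i => m i.succ)
      (fun i => hσ i.succ) (fun i => q i.succ)
      (α := α × Ω 0) (g := fun r xs => g r.1 (Fin.cons r.2 xs)) (hg.comp hc)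
    exact h1

lemma NQe_key : ∀ (N : ℕ) (Ω : Fin N → Type) (inst : ∀ i, MeasurableSpace (Ω i))
    (m : ∀ i, @MeasureTheory.Measure (Ω i) (inst i)) (_ : ∀ i, SigmaFinite (m i))
    (q : Fin N → ℝ) (_ : ∀ k, 0 < q k ∧ q k ≤ 1)
    (ρ₁ ρ₂ : (∀ i, Ω i) → ℝ≥0∞) (_ : Measurable ρ₁) (_ : Measurable ρ₂),
    NQe N Ω inst m q (fun x => ρ₁ x + ρ₂ x) ≤ NQe N Ω inst m q ρ₁ + NQe N Ω inst m q ρ₂ ∧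
    ∀ α : ℝ≥0∞, α ≤ 1 →
      α * NQe N Ω inst m q ρ₁ + (1 - α) * NQe N Ω inst m q ρ₂ ≤
        NQe N Ω inst m q (fun x => α * ρ₁ x + (1 - α) * ρ₂ x)
  | 0, Ω, inst, m, hσ, q, hq, ρ₁, ρ₂, h₁, h₂ => by
    exact ⟨le_rfl, fun α hα => le_rfl⟩
  | n + 1, Ω, inst, m, hσ, q, hq, ρ₁, ρ₂, h₁, h₂ => by
    haveI := hσ 0
    set Ω' := fun i : Fin n => Ω i.succ
    set inst' := fun i : Fin n => inst i.succ
    set m' := fun i : Fin n => m i.succ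
    set q' := fun i : Fin n => q i.succ
    have hσ' : ∀ i, SigmaFinite (m' i) := fun i => hσ i.succ
    have hq' : ∀ k, 0 < q' k ∧ q' k ≤ 1 := fun k => hq k.succ
    have hq0 := hq 0
    have hcons : ∀ x0 : Ω 0, Measurable fun xs : ∀ i, Ω' i => Fin.cons (α := Ω) x0 xs := by
      intro x0
      refine measurable_pi_lambda _ fun i => ?_
      refine Fin.cases ?_ (fun j => ?_) i
      · simpa using (measurable_const : Measurable fun _ : ∀ i, Ω' i => x0)
      · simpa using measurable_pi_apply j
    set F₁ := fun x0 : Ω 0 => NQe n Ω' inst' m' q' fun xs => ρ₁ (Fin.cons x0 xs) with hF₁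
    set F₂ := fun x0 : Ω 0 => NQe n Ω' inst' m' q' fun xs => ρ₂ (Fin.cons x0 xs) with hF₂
    have hmeasF : ∀ (ρ : (∀ i, Ω i) → ℝ≥0∞), Measurable ρ →
        Measurable fun x0 : Ω 0 => NQe n Ω' inst' m' q' fun xs => ρ (Fin.cons x0 xs) := by
      intro ρ hρ
      refine NQe_meas n Ω' inst' m' hσ' q' (fun x0 xs => ρ (Fin.cons x0 xs)) ?_
      refine hρ.comp ?_
      refine measurable_pi_lambda _ fun i => ?_
      refine Fin.cases ?_ (fun j => ?_) i
      · simpa using (measurable_fst : Measurable fun p : Ω 0 × (∀ i, Ω' i) => p.1)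
      · exact (measurable_pi_apply j).comp measurable_snd
    have hIH : ∀ x0 : Ω 0,
        (NQe n Ω' inst' m' q' fun xs => ρ₁ (Fin.cons x0 xs) + ρ₂ (Fin.cons x0 xs)) ≤
          F₁ x0 + F₂ x0 ∧ ∀ α : ℝ≥0∞, α ≤ 1 →
          α * F₁ x0 + (1 - α) * F₂ x0 ≤
            NQe n Ω' inst' m' q' fun xs => α * ρ₁ (Fin.cons x0 xs) + (1 - α) * ρ₂ (Fin.cons x0 xs) :=
      fun x0 => NQe_key n Ω' inst' m' hσ' q' hq' _ _
        (h₁.comp (hcons x0)) (h₂.comp (hcons x0))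
    constructor
    · show (∫⁻ x0, (NQe n Ω' inst' m' q' fun xs => ρ₁ (Fin.cons x0 xs) + ρ₂ (Fin.cons x0 xs)) ^ q 0 ∂ m 0)
        ≤ (∫⁻ x0, F₁ x0 ^ q 0 ∂ m 0) + (∫⁻ x0, F₂ x0 ^ q 0 ∂ m 0)
      calc (∫⁻ x0, (NQe n Ω' inst' m' q' fun xs => ρ₁ (Fin.cons x0 xs) + ρ₂ (Fin.cons x0 xs)) ^ q 0 ∂ m 0)
          ≤ ∫⁻ x0, F₁ x0 ^ q 0 + F₂ x0 ^ q 0 ∂ m 0 := by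
            refine lintegral_mono fun x0 => ?_
            calc (NQe n Ω' inst' m' q' fun xs => ρ₁ (Fin.cons x0 xs) + ρ₂ (Fin.cons x0 xs)) ^ q 0
                ≤ (F₁ x0 + F₂ x0) ^ q 0 := ENNReal.rpow_le_rpow (hIH x0).1 hq0.1.le
              _ ≤ F₁ x0 ^ q 0 + F₂ x0 ^ q 0 := ENNReal.rpow_add_le_add_rpow _ _ hq0.1.le hq0.2
        _ = (∫⁻ x0, F₁ x0 ^ q 0 ∂ m 0) + (∫⁻ x0, F₂ x0 ^ q 0 ∂ m 0) :=
            lintegral_add_left ((hmeasF ρ₁ h₁).pow measurable_const) _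
    · intro α hα
      show α * (∫⁻ x0, F₁ x0 ^ q 0 ∂ m 0) + (1 - α) * (∫⁻ x0, F₂ x0 ^ q 0 ∂ m 0) ≤
        ∫⁻ x0, (NQe n Ω' inst' m' q' fun xs =>
          α * ρ₁ (Fin.cons x0 xs) + (1 - α) * ρ₂ (Fin.cons x0 xs)) ^ q 0 ∂ m 0
      calc α * (∫⁻ x0, F₁ x0 ^ q 0 ∂ m 0) + (1 - α) * (∫⁻ x0, F₂ x0 ^ q 0 ∂ m 0)
          = ∫⁻ x0, α * F₁ x0 ^ q 0 + (1 - α) * F₂ x0 ^ q 0 ∂ m 0 := by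
            rw [lintegral_add_left (((hmeasF ρ₁ h₁).pow measurable_const).const_mul α),
              lintegral_const_mul α ((hmeasF ρ₁ h₁).pow measurable_const),
              lintegral_const_mul (1 - α) ((hmeasF ρ₂ h₂).pow measurable_const)]
        _ ≤ _ := by
            refine lintegral_mono fun x0 => ?_
            calc α * F₁ x0 ^ q 0 + (1 - α) * F₂ x0 ^ q 0
                ≤ (α * F₁ x0 + (1 - α) * F₂ x0) ^ q 0 :=
                  concave_rpow_pt hq0.1 hq0.2 α _ _ hα
              _ ≤ _ := ENNReal.rpow_le_rpow ((hIH x0).2 α hα) hq0.1.le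

/-- For exponents `q ∈ (0,1]ᴺ`, the functional `N_q` is subadditive and concave on the
cone of nonnegative measurable functions on the product measure space. -/
theorem stmt18 (N : ℕ) (Ω : Fin N → Type) [inst : ∀ i, MeasurableSpace (Ω i)]
    (m : ∀ i, Measure (Ω i)) [∀ i, SigmaFinite (m i)]
    (q : Fin N → ℝ) (hq : ∀ k, 0 < q k ∧ q k ≤ 1)
    (ρ₁ ρ₂ : (∀ i, Ω i) → ℝ≥0∞) (hρ₁ : Measurable ρ₁) (hρ₂ : Measurable ρ₂) :
    NQe N Ω (fun i => inferInstance) m q (fun x => ρ₁ x + ρ₂ x) ≤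
        NQe N Ω (fun i => inferInstance) m q ρ₁ +
          NQe N Ω (fun i => inferInstance) m q ρ₂ ∧
    ∀ α : ℝ≥0∞, α ≤ 1 →
      α * NQe N Ω (fun i => inferInstance) m q ρ₁ +
          (1 - α) * NQe N Ω (fun i => inferInstance) m q ρ₂ ≤
        NQe N Ω (fun i => inferInstance) m q
          (fun x => α * ρ₁ x + (1 - α) * ρ₂ x) := by
  exact NQe_key N Ω (fun i => inferInstance) m (fun i => inferInstance) q hq ρ₁ ρ₂ hρ₁ hρ₂
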